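/- Assume A ≠ 0 and let τ be a real number with 0 < τ ≤ 1/(2·λmax(AᴴA)). If x* ∈ S is a global minimizer of f over the block sparse set S, then x* is a τ-stationary point; that is, for every block i, the restriction of x* to B_i is a projection of the restriction of x* − τ·∇f(x*) to B_i onto the set of vectors on B_i with at most s_i nonzero entries. -/

import Mathlib

open Matrix

/-- The (Wirtinger) gradient of `f(x) = ‖Ax - y‖²`, namely `∇f(x) = Aᴴ(Ax - y)`. -/
noncomputable def gradf {m n : ℕ} (A : Matrix (Fin m) (Fin n) ℂ) (y : Fin m → ℂ)
    (x : Fin n → ℂ) : Fin n → ℂ :=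
  Aᴴ.mulVec (A.mulVec x - y)

/-- The Euclidean norm on `ℂᵏ`. -/
noncomputable def euclNorm {k : ℕ} (v : Fin k → ℂ) : ℝ :=
  Real.sqrt (∑ i, ‖v i‖ ^ 2)

/-- The objective `f(x) = ‖Ax - y‖²` (squared Euclidean norm). -/
noncomputable def fObj {m n : ℕ} (A : Matrix (Fin m) (Fin n) ℂ) (y : Fin m → ℂ)
    (x : Fin n → ℂ) : ℝ :=
  euclNorm (A.mulVec x - y) ^ 2

/-- The largest eigenvalue of the Hermitian matrix `AᴴA`. -/
noncomputable def lamMax {m n : ℕ} (A : Matrix (Fin m) (Fin n) ℂ) : ℝ :=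
  ⨆ i, (Matrix.isHermitian_conjTranspose_mul_self A).eigenvalues i

open Classical in
/-- `‖x_[B]‖₀`: the number of nonzero entries of `x` on the index set `B`. -/
noncomputable def blockL0 {n : ℕ} (B : Finset (Fin n)) (x : Fin n → ℂ) : ℕ :=
  (B.filter fun j => x j ≠ 0).card

/-- `v` (restricted to `B`) is a projection of `u` (restricted to `B`) onto the set of
vectors on `B` with at most `s` nonzero entries: `v` is `s`-sparse on `B` and its Euclidean
distance to `u` on `B` is no larger than that of any `s`-sparse (on `B`) vector `w`. -/
noncomputable def IsBlockProj {n : ℕ} (B : Finset (Fin n)) (s : ℕ)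
    (v u : Fin n → ℂ) : Prop :=
  blockL0 B v ≤ s ∧
    ∀ w : Fin n → ℂ, blockL0 B w ≤ s →
      Real.sqrt (∑ j ∈ B, ‖v j - u j‖ ^ 2) ≤ Real.sqrt (∑ j ∈ B, ‖w j - u j‖ ^ 2)

private lemma norm_sq_add_expand (a b : ℂ) :
    ‖a + b‖ ^ 2 = ‖a‖ ^ 2 + 2 * ((starRingEnd ℂ) a * b).re + ‖b‖ ^ 2 := by
  simp only [Complex.sq_norm, Complex.normSq_apply, Complex.add_re,
    Complex.add_im, Complex.mul_re, Complex.conj_re, Complex.conj_im]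
  ring

private lemma re_conj_mul_self (z : ℂ) : ((starRingEnd ℂ) z * z).re = ‖z‖ ^ 2 := by
  simp only [Complex.sq_norm, Complex.normSq_apply, Complex.mul_re,
    Complex.conj_re, Complex.conj_im]
  ring

private lemma re_conj_mul_real_mul (t : ℝ) (z : ℂ) :
    ((starRingEnd ℂ) z * ((t : ℂ) * z)).re = t * ‖z‖ ^ 2 := by
  simp only [Complex.sq_norm, Complex.normSq_apply, Complex.mul_re,
    Complex.mul_im, Complex.conj_re, Complex.conj_im, Complex.ofReal_re, Complex.ofReal_im]
  ring

private lemma re_flip (a b : ℂ) : ((starRingEnd ℂ) a * b).re = ((starRingEnd ℂ) b * a).re := by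
  simp only [Complex.mul_re, Complex.conj_re, Complex.conj_im]
  ring

private lemma quad_bound {m n : ℕ} (A : Matrix (Fin m) (Fin n) ℂ) (h : Fin n → ℂ) :
    ∑ k, ‖A.mulVec h k‖ ^ 2 ≤ lamMax A * ∑ j, ‖h j‖ ^ 2 := by
  rcases Nat.eq_zero_or_pos n with hn | hn
  · subst hn
    simp [Matrix.mulVec, dotProduct]
  have hne : Nonempty (Fin n) := ⟨⟨0, hn⟩⟩
  set hM := Matrix.isHermitian_conjTranspose_mul_self A with hMdef
  set U : Matrix (Fin n) (Fin n) ℂ :=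
    (Matrix.IsHermitian.eigenvectorUnitary hM : Matrix (Fin n) (Fin n) ℂ) with hU
  set c : Fin n → ℂ := star U *ᵥ h with hc
  have hsc : star c = star h ᵥ* U := by
    rw [hc, Matrix.star_mulVec, Matrix.star_eq_conjTranspose, Matrix.conjTranspose_conjTranspose]
  have hUU : U * star U = 1 :=
    Matrix.mem_unitaryGroup_iff.mp (Matrix.IsHermitian.eigenvectorUnitary hM).2
  -- step A : ∑ ‖A h‖² = re (star h ⬝ᵥ (Aᴴ A) h)
  have stepA : ∑ k, ‖A.mulVec h k‖ ^ 2 = (star h ⬝ᵥ ((Aᴴ * A) *ᵥ h)).re := by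
    rw [← Matrix.mulVec_mulVec, Matrix.dotProduct_mulVec, ← Matrix.star_mulVec,
      dotProduct, Complex.re_sum]
    exact Finset.sum_congr rfl fun k _ => (re_conj_mul_self _).symm
  -- step B : diagonalize
  have stepB : (star h ⬝ᵥ ((Aᴴ * A) *ᵥ h)).re = ∑ k, hM.eigenvalues k * ‖c k‖ ^ 2 := by
    conv_lhs => rw [hM.spectral_theorem, Unitary.conjStarAlgAut_apply]
    rw [mul_assoc, ← Matrix.mulVec_mulVec, Matrix.dotProduct_mulVec, ← hsc,
      ← Matrix.mulVec_mulVec]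
    rw [dotProduct, Complex.re_sum]
    refine Finset.sum_congr rfl fun k _ => ?_
    have : (Matrix.diagonal (RCLike.ofReal ∘ hM.eigenvalues) *ᵥ c) k
        = ((hM.eigenvalues k : ℂ)) * c k := by
      rw [Matrix.mulVec_diagonal]; rfl
    rw [this]
    exact re_conj_mul_real_mul _ _
  -- step C : ∑ ‖c‖² = ∑ ‖h‖²
  have stepC : ∑ k, ‖c k‖ ^ 2 = ∑ j, ‖h j‖ ^ 2 := by
    have e1 : star c ⬝ᵥ c = star h ⬝ᵥ h := by
      rw [hsc, hc, ← Matrix.dotProduct_mulVec, Matrix.mulVec_mulVec, hUU, Matrix.one_mulVec]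
    have e2 : (star c ⬝ᵥ c).re = ∑ k, ‖c k‖ ^ 2 := by
      rw [dotProduct, Complex.re_sum]
      exact Finset.sum_congr rfl fun k _ => re_conj_mul_self _
    have e3 : (star h ⬝ᵥ h).re = ∑ j, ‖h j‖ ^ 2 := by
      rw [dotProduct, Complex.re_sum]
      exact Finset.sum_congr rfl fun k _ => re_conj_mul_self _
    rw [← e2, e1, e3]
  rw [stepA, stepB, ← stepC, Finset.mul_sum]
  refine Finset.sum_le_sum fun k _ => ?_
  have hle : hM.eigenvalues k ≤ lamMax A :=
    le_ciSup (Set.Finite.bddAbove (Set.finite_range hM.eigenvalues)) k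
  exact mul_le_mul_of_nonneg_right hle (by positivity)

private lemma lamMax_pos {m n : ℕ} (A : Matrix (Fin m) (Fin n) ℂ) (hA : A ≠ 0) :
    0 < lamMax A := by
  have hex : ∃ i j, A i j ≠ 0 := by
    by_contra hc
    push_neg at hc
    exact hA (by ext i j; simpa using hc i j)
  obtain ⟨i0, j0, hij⟩ := hex
  have h2 : A.mulVec (Pi.single j0 1 : Fin n → ℂ) = fun i => A i j0 := by
    rw [Matrix.mulVec_single]
    funext i; exact mul_one _
  have h1 : ∑ j, ‖(Pi.single j0 1 : Fin n → ℂ) j‖ ^ 2 = 1 := by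
    have : ∀ j, ‖(Pi.single j0 1 : Fin n → ℂ) j‖ ^ 2 = if j = j0 then 1 else 0 := by
      intro j; by_cases hj : j = j0 <;> simp [Pi.single_apply, hj]
    rw [Finset.sum_congr rfl fun j _ => this j, Finset.sum_ite_eq' Finset.univ j0 (fun _ => 1)]
    simp
  have hb := quad_bound A (Pi.single j0 1 : Fin n → ℂ)
  rw [h1, h2, mul_one] at hb
  have hlow : ‖A i0 j0‖ ^ 2 ≤ ∑ i, ‖A i j0‖ ^ 2 :=
    Finset.single_le_sum (f := fun i => ‖A i j0‖ ^ 2) (fun i _ => by positivity) (Finset.mem_univ i0)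
  have : (0 : ℝ) < ‖A i0 j0‖ ^ 2 := pow_pos (norm_pos_iff.mpr hij) 2
  linarith

/-- If `A ≠ 0` and `0 < τ ≤ 1/(2·λmax(AᴴA))`, then any global minimizer `x*` of
`f` over the block sparse set `S` is a `τ`-stationary point: for each block `B i`, the
restriction of `x*` to `B i` is a projection of the restriction of `x* − τ·∇f(x*)` to `B i`
onto the set of vectors on `B i` with at most `s i` nonzero entries. -/
theorem minimizer_is_tau_stationary (m n I : ℕ) (A : Matrix (Fin m) (Fin n) ℂ)
    (y : Fin m → ℂ) (B : Fin I → Finset (Fin n))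
    (hdisj : ∀ i i', i ≠ i' → Disjoint (B i) (B i'))
    (hne : ∀ i, (B i).Nonempty)
    (hcover : ∀ j, ∃ i, j ∈ B i)
    (s : Fin I → ℕ) (hspos : ∀ i, 0 < s i) (hsle : ∀ i, s i ≤ (B i).card)
    (hA : A ≠ 0) (τ : ℝ) (hτpos : 0 < τ) (hτle : τ ≤ 1 / (2 * lamMax A))
    (xstar : Fin n → ℂ)
    (hfeas : ∀ i, blockL0 (B i) xstar ≤ s i)
    (hmin : ∀ x : Fin n → ℂ, (∀ i, blockL0 (B i) x ≤ s i) → fObj A y xstar ≤ fObj A y x) :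
    ∀ i, IsBlockProj (B i) (s i) xstar
      (fun j => xstar j - (τ : ℂ) * gradf A y xstar j) := by
  intro i
  classical
  refine ⟨hfeas i, ?_⟩
  intro w hw
  set g : Fin n → ℂ := gradf A y xstar with hg
  set x : Fin n → ℂ := fun j => if j ∈ B i then w j else xstar j with hxdef
  have hxfeas : ∀ i', blockL0 (B i') x ≤ s i' := by
    intro i'
    by_cases hi : i' = i
    · subst hi
      have he : blockL0 (B i') x = blockL0 (B i') w := by
        unfold blockL0
        congr 1
        apply Finset.filter_congr
        intro j hj
        simp [hxdef, hj]
      rw [he]; exact hw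
    · have he : blockL0 (B i') x = blockL0 (B i') xstar := by
        unfold blockL0
        congr 1
        apply Finset.filter_congr
        intro j hj
        have hjB : j ∉ B i := Finset.disjoint_left.mp (hdisj i' i hi) hj
        simp [hxdef, hjB]
      rw [he]; exact hfeas i'
  set h : Fin n → ℂ := fun j => x j - xstar j with hh
  have hsupp : ∀ j, j ∉ B i → h j = 0 := by
    intro j hj; simp [hh, hxdef, hj]
  have fObj_eq : ∀ z : Fin n → ℂ, fObj A y z = ∑ k, ‖(A.mulVec z - y) k‖ ^ 2 := by
    intro z
    rw [fObj, euclNorm, Real.sq_sqrt (Finset.sum_nonneg fun k _ => by positivity)]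
  set r : Fin m → ℂ := A.mulVec xstar - y with hr
  set a : Fin m → ℂ := A.mulVec h with ha
  have hAx : A.mulVec x - y = fun k => r k + a k := by
    have hx : x = xstar + h := by funext j; simp [hh]
    funext k
    rw [hx, Matrix.mulVec_add]
    simp [hr, ha]
    ring
  -- key inequality from optimality
  have hkey : 0 ≤ 2 * ∑ j, ((starRingEnd ℂ) (h j) * g j).re + ∑ k, ‖a k‖ ^ 2 := by
    have hmx := hmin x hxfeas
    rw [fObj_eq, fObj_eq, hAx] at hmx
    have hexp : ∑ k, ‖r k + a k‖ ^ 2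
        = ∑ k, ‖r k‖ ^ 2 + (2 * ∑ k, ((starRingEnd ℂ) (r k) * a k).re + ∑ k, ‖a k‖ ^ 2) := by
      rw [Finset.mul_sum, ← Finset.sum_add_distrib, ← Finset.sum_add_distrib]
      exact Finset.sum_congr rfl fun k _ => by
        rw [norm_sq_add_expand]; ring
    rw [hexp] at hmx
    have hflip : ∑ k, ((starRingEnd ℂ) (r k) * a k).re
        = ∑ j, ((starRingEnd ℂ) (h j) * g j).re := by
      have e1 : ∑ k, ((starRingEnd ℂ) (r k) * a k).re = (star a ⬝ᵥ r).re := by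
        rw [dotProduct, Complex.re_sum]
        exact Finset.sum_congr rfl fun k _ => re_flip _ _
      have e2 : star a ⬝ᵥ r = star h ⬝ᵥ g := by
        rw [ha, Matrix.star_mulVec, ← Matrix.dotProduct_mulVec]
        rfl
      have e3 : (star h ⬝ᵥ g).re = ∑ j, ((starRingEnd ℂ) (h j) * g j).re := by
        rw [dotProduct, Complex.re_sum]
        rfl
      rw [e1, e2, e3]
    rw [hflip] at hmx
    linarith
  have quad : ∑ k, ‖a k‖ ^ 2 ≤ lamMax A * ∑ j, ‖h j‖ ^ 2 := by
    rw [ha]; exact quad_bound A h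
  have hlam : 0 < lamMax A := lamMax_pos A hA
  have hτL : τ * lamMax A ≤ 1 / 2 := by
    rw [le_div_iff₀ (by positivity)] at hτle
    linarith
  have hsum1 : ∑ j, ‖h j‖ ^ 2 = ∑ j ∈ B i, ‖h j‖ ^ 2 :=
    (Finset.sum_subset (Finset.subset_univ _) (fun j _ hj => by rw [hsupp j hj]; simp)).symm
  have hsum2 : ∑ j, ((starRingEnd ℂ) (h j) * g j).re
      = ∑ j ∈ B i, ((starRingEnd ℂ) (h j) * g j).re :=
    (Finset.sum_subset (Finset.subset_univ _) (fun j _ hj => by rw [hsupp j hj]; simp)).symm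
  -- final comparison of sums
  apply Real.sqrt_le_sqrt
  have lhs_eq : ∀ j, xstar j - (xstar j - (τ : ℂ) * g j) = (τ : ℂ) * g j := fun j => by ring
  have rhs_eq : ∀ j ∈ B i, w j - (xstar j - (τ : ℂ) * g j) = h j + (τ : ℂ) * g j := by
    intro j hj
    simp only [hh, hxdef, if_pos hj]
    ring
  calc ∑ j ∈ B i, ‖xstar j - (xstar j - (τ : ℂ) * g j)‖ ^ 2
      = ∑ j ∈ B i, ‖(τ : ℂ) * g j‖ ^ 2 :=
        Finset.sum_congr rfl fun j _ => by rw [lhs_eq]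
    _ ≤ ∑ j ∈ B i, ‖h j + (τ : ℂ) * g j‖ ^ 2 := by
        have hexp2 : ∑ j ∈ B i, ‖h j + (τ : ℂ) * g j‖ ^ 2
            = ∑ j ∈ B i, ‖h j‖ ^ 2
              + 2 * (τ * ∑ j ∈ B i, ((starRingEnd ℂ) (h j) * g j).re)
              + ∑ j ∈ B i, ‖(τ : ℂ) * g j‖ ^ 2 := by
          rw [Finset.mul_sum, Finset.mul_sum, ← Finset.sum_add_distrib, ← Finset.sum_add_distrib]
          refine Finset.sum_congr rfl fun j _ => ?_
          rw [norm_sq_add_expand]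
          have : ((starRingEnd ℂ) (h j) * ((τ : ℂ) * g j)).re
              = τ * ((starRingEnd ℂ) (h j) * g j).re := by
            rw [mul_left_comm, Complex.re_ofReal_mul]
          rw [this]
        rw [hexp2]
        have hS : 0 ≤ ∑ j ∈ B i, ‖h j‖ ^ 2 := Finset.sum_nonneg fun j _ => by positivity
        have hq2 : ∑ k, ‖a k‖ ^ 2 ≤ lamMax A * ∑ j ∈ B i, ‖h j‖ ^ 2 := by
          rw [← hsum1]; exact quad
        have hk2 : 0 ≤ 2 * ∑ j ∈ B i, ((starRingEnd ℂ) (h j) * g j).re + ∑ k, ‖a k‖ ^ 2 := by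
          rw [← hsum2]; exact hkey
        nlinarith [mul_le_mul_of_nonneg_left hq2 hτpos.le,
          mul_nonneg hτpos.le hk2,
          mul_le_mul_of_nonneg_right hτL hS]
    _ = ∑ j ∈ B i, ‖w j - (xstar j - (τ : ℂ) * g j)‖ ^ 2 :=
        (Finset.sum_congr rfl fun j hj => by rw [rhs_eq j hj]).symm
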